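/- Fix real parameters σ > 0, γ > 0, g > 0 and η ≠ 0; set ω = σγη and β = 2σ²/g, and define u(t) = cosh(ωt) + (ω/β)sinh(ωt), v(t) = cosh(ωt) + (β/ω)sinh(ωt), a(t) = g·v(t)/u(t), P(t) = p₀/u(t), Q(t) = (Q₀ − ηβ(u(t) − 1)/ω²)/v(t) for given p₀, Q₀ ∈ ℝ. Then the function φ(t) = (2σ²p₀/g)·(η(cosh(ωt) − 1)/ω² − Q₀·sinh(ωt)/ω)/v(t) satisfies φ(0) = 0 and, for every t ≥ 0, φ'(t) = −(2σ²/a(t))·Q(t)·P(t). -/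

import Mathlib

/-- The explicit phase
`φ(t) = (2σ²p₀/g)(η(cosh(ωt)−1)/ω² − Q₀ sinh(ωt)/ω)/v(t)`
satisfies `φ(0) = 0` and `φ'(t) = −(2σ²/a(t))·Q(t)·P(t)` for `t ≥ 0`. -/
theorem stmt3 (σ γ g η : ℝ) (hσ : 0 < σ) (hγ : 0 < γ) (hg : 0 < g) (hη : η ≠ 0)
    (p₀ Q₀ : ℝ) (ω β : ℝ) (hω : ω = σ * γ * η) (hβ : β = 2 * σ ^ 2 / g)
    (u v a P Q φ : ℝ → ℝ)
    (hu : ∀ t, u t = Real.cosh (ω * t) + (ω / β) * Real.sinh (ω * t))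
    (hv : ∀ t, v t = Real.cosh (ω * t) + (β / ω) * Real.sinh (ω * t))
    (ha : ∀ t, a t = g * v t / u t)
    (hP : ∀ t, P t = p₀ / u t)
    (hQ : ∀ t, Q t = (Q₀ - η * β * (u t - 1) / ω ^ 2) / v t)
    (hφ : ∀ t, φ t =
      (2 * σ ^ 2 * p₀ / g) *
        ((η * (Real.cosh (ω * t) - 1) / ω ^ 2 - Q₀ * Real.sinh (ω * t) / ω) / v t)) :
    φ 0 = 0 ∧
    ∀ t ≥ 0, HasDerivAt φ (-(2 * σ ^ 2 / a t) * Q t * P t) t := by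
  have hω0 : ω ≠ 0 := by
    rw [hω]; exact mul_ne_zero (mul_ne_zero hσ.ne' hγ.ne') hη
  have hβ0 : 0 < β := by rw [hβ]; positivity
  constructor
  · rw [hφ]; simp
  · intro t ht
    have hws : 0 ≤ ω * Real.sinh (ω * t) := by
      rcases lt_or_gt_of_ne hω0 with h | h
      · have h1 : ω * t ≤ 0 := mul_nonpos_of_nonpos_of_nonneg h.le ht
        have := Real.sinh_nonpos_iff.mpr h1
        nlinarith
      · have h1 : 0 ≤ ω * t := mul_nonneg h.le ht
        have := Real.sinh_nonneg_iff.mpr h1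
        nlinarith
    have hup : 0 < Real.cosh (ω * t) + (ω / β) * Real.sinh (ω * t) := by
      have h1 : (0:ℝ) ≤ (ω / β) * Real.sinh (ω * t) := by
        have h2 : (ω / β) * Real.sinh (ω * t) = (ω * Real.sinh (ω * t)) / β := by ring
        rw [h2]; positivity
      have := Real.one_le_cosh (ω * t)
      linarith
    have hvp : 0 < Real.cosh (ω * t) + (β / ω) * Real.sinh (ω * t) := by
      have h1 : (0:ℝ) ≤ (β / ω) * Real.sinh (ω * t) := by
        have h2 : (β / ω) * Real.sinh (ω * t) = β * (ω * Real.sinh (ω * t)) / ω ^ 2 := by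
          field_simp
        rw [h2]; positivity
      have := Real.one_le_cosh (ω * t)
      linarith
    have hu0 : u t ≠ 0 := by rw [hu]; exact hup.ne'
    have hid : HasDerivAt (fun x : ℝ => ω * x) ω t := by
      simpa using (hasDerivAt_id t).const_mul ω
    have hc : HasDerivAt (fun x => Real.cosh (ω * x)) (Real.sinh (ω * t) * ω) t :=
      (Real.hasDerivAt_cosh (ω * t)).comp t hid
    have hs : HasDerivAt (fun x => Real.sinh (ω * x)) (Real.cosh (ω * t) * ω) t :=
      (Real.hasDerivAt_sinh (ω * t)).comp t hid
    have hN : HasDerivAt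
        (fun x => η * (Real.cosh (ω * x) - 1) / ω ^ 2 - Q₀ * Real.sinh (ω * x) / ω)
        (η * (Real.sinh (ω * t) * ω) / ω ^ 2 - Q₀ * (Real.cosh (ω * t) * ω) / ω) t :=
      (((hc.sub_const 1).const_mul η).div_const (ω ^ 2)).sub
        ((hs.const_mul Q₀).div_const ω)
    have hV : HasDerivAt
        (fun x => Real.cosh (ω * x) + (β / ω) * Real.sinh (ω * x))
        (Real.sinh (ω * t) * ω + (β / ω) * (Real.cosh (ω * t) * ω)) t :=
      hc.add (hs.const_mul (β / ω))
    have hF := (hN.div hV hvp.ne').const_mul (2 * σ ^ 2 * p₀ / g)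
    have hφeq : φ = fun x =>
        (2 * σ ^ 2 * p₀ / g) *
          ((η * (Real.cosh (ω * x) - 1) / ω ^ 2 - Q₀ * Real.sinh (ω * x) / ω) /
            (Real.cosh (ω * x) + (β / ω) * Real.sinh (ω * x))) := by
      funext x; rw [hφ, hv]
    rw [hφeq]
    have hcs : Real.cosh (ω * t) ^ 2 - Real.sinh (ω * t) ^ 2 = 1 :=
      Real.cosh_sq_sub_sinh_sq _
    set c := Real.cosh (ω * t) with hcdef
    set s := Real.sinh (ω * t) with hsdef
    have key : (η * (s * ω) / ω ^ 2 - Q₀ * (c * ω) / ω) * (c + β / ω * s) -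
        (η * (c - 1) / ω ^ 2 - Q₀ * s / ω) * (s * ω + β / ω * (c * ω)) =
        -(Q₀ - η * β * (u t - 1) / ω ^ 2) := by
      rw [hu]
      field_simp
      linear_combination ((-(η * β) - Q₀ * ω ^ 2) * β + (η * β ^ 2 + Q₀ * β * ω ^ 2) * (1 - ω ^ 4) + (η * ω ^ 4 * β ^ 2 - η * β - ω ^ 2 * Q₀ + ω ^ 6 * Q₀ * β)) * hcs
    convert hF using 1
    case e'_4 => rfl
    case e'_5 => rfl
    case e'_8 => rfl
    rw [ha, hP, hQ, hv]
    rw [key]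
    have hvne : c + β / ω * s ≠ 0 := hvp.ne'
    set A := Q₀ - η * β * (u t - 1) / ω ^ 2 with hA
    set V := c + β / ω * s with hVdef
    set U := u t with hUdef
    field_simp
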